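/- arXiv:1601.02515 — 2 statements merged into one kernel-verified Lean document; each statement's English description precedes it below -/
import Mathlib

section
/- There exist constants C > 0 such that for all x ≥ 3, |Σ_{p ≤ x, p prime} 1/p - log log x - M| ≤ C/log x, where M is the Meissel–Mertens constant. -/
open Filter

namespace Stmt14Aux

open Finset ArithmeticFunction Filter

lemma lemA (n : ℕ) : ∑ k ∈ Ioc 0 n, Real.log k = ∑ d ∈ Ioc 0 n, Λ d * (n / d : ℕ) := by
  have h1 : ∀ k ∈ Ioc 0 n, Real.log k = ∑ d ∈ Ioc 0 n, if d ∣ k then Λ d else 0 := by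
    intro k hk
    simp only [mem_Ioc] at hk
    rw [← ArithmeticFunction.vonMangoldt_sum (n := k), ← Finset.sum_filter]
    congr 1
    ext d
    simp only [Nat.mem_divisors, mem_filter, mem_Ioc]
    constructor
    · rintro ⟨hd, hk0⟩
      exact ⟨⟨Nat.pos_of_dvd_of_pos hd hk.1, le_trans (Nat.le_of_dvd hk.1 hd) hk.2⟩, hd⟩
    · rintro ⟨-, hd⟩
      exact ⟨hd, hk.1.ne'⟩
  rw [Finset.sum_congr rfl h1, Finset.sum_comm]
  refine Finset.sum_congr rfl fun d _ => ?_
  rw [← Finset.sum_filter, Finset.sum_const, ← Nat.Ioc_filter_dvd_card_eq_div]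
  · simp [mul_comm]

lemma lemB (n : ℕ) : (n : ℝ) * Real.log n - n ≤ ∑ k ∈ Ioc 0 n, Real.log k := by
  induction n with
  | zero => simp
  | succ m ih =>
    rw [Finset.sum_Ioc_succ_top (Nat.zero_le _)]
    push_cast
    rcases Nat.eq_zero_or_pos m with h | h
    · subst h; simp
    have hm0 : (0:ℝ) < m := by positivity
    have hlog : Real.log ((m+1)/m) ≤ ((m:ℝ)+1)/m - 1 :=
      Real.log_le_sub_one_of_pos (by positivity)
    rw [Real.log_div (by positivity) (ne_of_gt hm0)] at hlog
    have h2 : ((m:ℝ)+1)/m - 1 = 1/m := by field_simp; ring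
    rw [h2] at hlog
    have h3 : (m:ℝ) * (1/m) = 1 := by field_simp
    have h4 : (m:ℝ) * (Real.log (m+1) - Real.log m) ≤ 1 := by
      calc (m:ℝ) * (Real.log (m+1) - Real.log m) ≤ (m:ℝ) * (1/m) :=
        mul_le_mul_of_nonneg_left hlog hm0.le
      _ = 1 := h3
    have := ih
    push_cast at this
    nlinarith [this, h4]

lemma lemC (n : ℕ) : ∑ k ∈ Ioc 0 n, Real.log k ≤ (n:ℝ) * Real.log n := by
  calc ∑ k ∈ Ioc 0 n, Real.log k ≤ ∑ k ∈ Ioc 0 n, Real.log n := by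
        refine Finset.sum_le_sum fun k hk => ?_
        simp only [mem_Ioc] at hk
        exact Real.log_le_log (by exact_mod_cast hk.1) (by exact_mod_cast hk.2)
    _ = (n:ℝ) * Real.log n := by
        rw [Finset.sum_const, Nat.card_Ioc]; simp [nsmul_eq_mul]

lemma lemD (n : ℕ) : ∑ p ∈ (Ioc 0 n).filter Nat.Prime, Real.log p ≤ (n:ℝ) * Real.log 4 := by
  have h1 : ((Ioc 0 n).filter Nat.Prime) = (range (n+1)).filter Nat.Prime := by
    ext p; simp only [mem_filter, mem_Ioc, mem_range]
    constructor
    · rintro ⟨⟨h0, h1⟩, hp⟩; exact ⟨by omega, hp⟩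
    · rintro ⟨h0, hp⟩; exact ⟨⟨hp.pos, by omega⟩, hp⟩
  rw [h1]
  have h2 : ∑ p ∈ (range (n+1)).filter Nat.Prime, Real.log p
      = Real.log (primorial n) := by
    rw [primorial]
    push_cast
    rw [Real.log_prod]
    intro p hp
    simp only [mem_filter] at hp
    exact_mod_cast hp.2.pos.ne'
  rw [h2]
  calc Real.log (primorial n) ≤ Real.log ((4:ℝ)^n) := by
        apply Real.log_le_log (by exact_mod_cast primorial_pos n)
        exact_mod_cast primorial_le_4_pow n
    _ = (n:ℝ) * Real.log 4 := by rw [Real.log_pow]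

-- geometric tail bound
lemma geomtail {p : ℕ} (hp : 2 ≤ p) (n : ℕ) :
    ∑ k ∈ Icc 2 n, ((p:ℝ))⁻¹ ^ k ≤ 2 / (p:ℝ)^2 := by
  have hx0 : (0:ℝ) < (p:ℝ)⁻¹ := by positivity
  have hx : ((p:ℝ))⁻¹ ≤ 1/2 := by
    rw [inv_eq_one_div]
    apply div_le_div_of_nonneg_left <;> norm_num
    exact_mod_cast hp
  have himg : Icc 2 n = (range (n-1)).image (· + 2) := by
    ext k
    simp only [mem_Icc, mem_image, mem_range]
    constructor
    · rintro ⟨h2, hn⟩; exact ⟨k - 2, by omega, by omega⟩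
    · rintro ⟨j, hj, rfl⟩; omega
  rw [himg, Finset.sum_image (by intro a _ b _ h; simp only at h; omega)]
  have heq : ∑ j ∈ range (n-1), ((p:ℝ))⁻¹ ^ (j + 2) = (∑ j ∈ range (n-1), ((p:ℝ))⁻¹ ^ j) * ((p:ℝ))⁻¹ ^ 2 := by
    rw [Finset.sum_mul]
    exact Finset.sum_congr rfl fun j _ => pow_add _ _ _
  rw [heq]
  have hgeom : ∑ j ∈ range (n-1), ((p:ℝ))⁻¹ ^ j ≤ 2 := by
    calc ∑ j ∈ range (n-1), ((p:ℝ))⁻¹ ^ j ≤ ∑' j : ℕ, ((p:ℝ))⁻¹ ^ j := by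
          apply Summable.sum_le_tsum _ (fun i _ => by positivity)
          exact summable_geometric_of_lt_one hx0.le (lt_of_le_of_lt hx (by norm_num))
      _ = (1 - (p:ℝ)⁻¹)⁻¹ := tsum_geometric_of_lt_one hx0.le (lt_of_le_of_lt hx (by norm_num))
      _ ≤ 2 := by
          rw [inv_le_iff_one_le_mul₀ (by linarith)]
          linarith
  calc (∑ j ∈ range (n-1), ((p:ℝ))⁻¹ ^ j) * ((p:ℝ))⁻¹ ^ 2 ≤ 2 * ((p:ℝ))⁻¹^2 := by
        apply mul_le_mul_of_nonneg_right hgeom (by positivity)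
    _ = 2 / (p:ℝ)^2 := by rw [div_eq_mul_inv, inv_pow]

lemma logrpow (p : ℕ) (hp : 2 ≤ p) : Real.log p ≤ 2 * (p:ℝ) ^ ((1:ℝ)/2) := by
  have hp0 : (0:ℝ) < p := by positivity
  have h1 : Real.log ((p:ℝ) ^ ((1:ℝ)/2)) ≤ (p:ℝ) ^ ((1:ℝ)/2) - 1 :=
    Real.log_le_sub_one_of_pos (Real.rpow_pos_of_pos hp0 _)
  rw [Real.log_rpow hp0] at h1
  nlinarith [Real.rpow_pos_of_pos hp0 ((1:ℝ)/2)]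

lemma perp (p : ℕ) (hp : 2 ≤ p) : Real.log p * (2 / (p:ℝ)^2) ≤ 4 * (1/(p:ℝ)^((3:ℝ)/2)) := by
  have hp0 : (0:ℝ) < p := by positivity
  have h1 := logrpow p hp
  have hlog : 0 ≤ Real.log p := Real.log_nonneg (by exact_mod_cast Nat.one_le_of_lt hp)
  have key : (p:ℝ) ^ ((1:ℝ)/2) / (p:ℝ)^2 = 1/(p:ℝ)^((3:ℝ)/2) := by
    rw [show ((p:ℝ)^2 : ℝ) = (p:ℝ)^((2:ℝ)) by rw [← Real.rpow_natCast (p:ℝ) 2]; norm_num,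
      ← Real.rpow_sub hp0]
    norm_num
    rw [Real.rpow_neg hp0.le]
  calc Real.log p * (2/(p:ℝ)^2) ≤ (2 * (p:ℝ)^((1:ℝ)/2)) * (2/(p:ℝ)^2) := by
        apply mul_le_mul_of_nonneg_right h1 (by positivity)
    _ = 4 * ((p:ℝ)^((1:ℝ)/2) / (p:ℝ)^2) := by ring
    _ = 4 * (1/(p:ℝ)^((3:ℝ)/2)) := by rw [key]

noncomputable def KK : ℝ := 4 * ∑' m : ℕ, 1/(m:ℝ)^((3:ℝ)/2)

lemma summ32 : Summable (fun m : ℕ => 1/(m:ℝ)^((3:ℝ)/2)) :=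
  Real.summable_one_div_nat_rpow.mpr (by norm_num)

lemma sum_rpow_le (s : Finset ℕ) : ∑ p ∈ s, 4 * (1/(p:ℝ)^((3:ℝ)/2)) ≤ KK := by
  rw [KK, ← Finset.mul_sum]
  apply mul_le_mul_of_nonneg_left _ (by norm_num : (0:ℝ) ≤ 4)
  exact Summable.sum_le_tsum s (fun i _ => by positivity) summ32

lemma KK_nonneg : 0 ≤ KK := le_trans (by simp) (sum_rpow_le ∅)

lemma fiber_sum {p n : ℕ} (hp : p.Prime) (hpn : p ≤ n) :
    ∑ d ∈ ((Icc 2 n).image (p ^ ·)).filter (fun d => d ≤ n ∧ d.minFac = p),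
      Λ d / d ≤ Real.log p * (2 / (p:ℝ)^2) := by
  have hp2 : 2 ≤ p := hp.two_le
  calc ∑ d ∈ ((Icc 2 n).image (p ^ ·)).filter (fun d => d ≤ n ∧ d.minFac = p), Λ d / d
      ≤ ∑ d ∈ (Icc 2 n).image (p ^ ·), Λ d / d := by
        apply Finset.sum_le_sum_of_subset_of_nonneg (Finset.filter_subset _ _)
        intro d _ _
        have := ArithmeticFunction.vonMangoldt_nonneg (n := d)
        positivity
    _ = ∑ k ∈ Icc 2 n, Λ (p ^ k) / (p ^ k : ℕ) := by
        rw [Finset.sum_image]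
        intro a _ b _ h
        exact Nat.pow_right_injective hp2 h
    _ ≤ ∑ k ∈ Icc 2 n, Real.log p * ((p:ℝ))⁻¹ ^ k := by
        apply Finset.sum_le_sum
        intro k hk
        simp only [mem_Icc] at hk
        rw [ArithmeticFunction.vonMangoldt_apply_pow (by omega),
          ArithmeticFunction.vonMangoldt_apply_prime hp]
        rw [div_eq_mul_inv]
        apply mul_le_mul_of_nonneg_left _ (Real.log_nonneg (by exact_mod_cast Nat.one_le_of_lt hp2))
        rw [Nat.cast_pow, ← inv_pow]
    _ = Real.log p * ∑ k ∈ Icc 2 n, ((p:ℝ))⁻¹ ^ k := by rw [Finset.mul_sum]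
    _ ≤ Real.log p * (2 / (p:ℝ)^2) := by
        apply mul_le_mul_of_nonneg_left (geomtail hp2 n)
          (Real.log_nonneg (by exact_mod_cast Nat.one_le_of_lt hp2))

lemma lemE (n : ℕ) :
    ∑ d ∈ (Ioc 0 n).filter (fun d => ¬ d.Prime), Λ d / d ≤ KK := by
  classical
  set fiber : ℕ → Finset ℕ :=
    fun p => ((Icc 2 n).image (p ^ ·)).filter (fun d => d ≤ n ∧ d.minFac = p) with hfiber
  have hsub : (Ioc 0 n).filter (fun d => ¬ d.Prime ∧ IsPrimePow d)
      ⊆ (Icc 2 n).biUnion fiber := by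
    intro d hd
    simp only [mem_filter, mem_Ioc] at hd
    obtain ⟨⟨hd0, hdn⟩, hnp, hpp⟩ := hd
    obtain ⟨p, k, hp, hk, rfl⟩ := hpp
    rw [← Nat.prime_iff] at hp
    have hk2 : 2 ≤ k := by
      by_contra h
      push_neg at h
      have hk1 : k = 1 := by omega
      subst hk1
      rw [pow_one] at hnp
      exact hnp hp
    have hpn : p ≤ n := le_trans (Nat.le_self_pow (by omega) p) hdn
    have hkn : k ≤ n := by
      have h1 : k < 2 ^ k := Nat.lt_two_pow_self
      have h2 : 2 ^ k ≤ p ^ k := Nat.pow_le_pow_left hp.two_le k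
      omega
    refine Finset.mem_biUnion.mpr ⟨p, Finset.mem_Icc.mpr ⟨hp.two_le, hpn⟩, ?_⟩
    rw [hfiber]
    refine Finset.mem_filter.mpr ⟨Finset.mem_image.mpr ⟨k, Finset.mem_Icc.mpr ⟨hk2, hkn⟩, rfl⟩,
      hdn, ?_⟩
    rw [Nat.pow_minFac (by omega)]
    exact hp.minFac_eq
  have hdisj : ∀ p ∈ Icc 2 n, ∀ q ∈ Icc 2 n, p ≠ q → Disjoint (fiber p) (fiber q) := by
    intro p _ q _ hpq
    rw [Finset.disjoint_left]
    intro d hdp hdq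
    simp only [hfiber, mem_filter] at hdp hdq
    exact hpq (hdp.2.2 ▸ hdq.2.2)
  calc ∑ d ∈ (Ioc 0 n).filter (fun d => ¬ d.Prime), Λ d / d
      = ∑ d ∈ (Ioc 0 n).filter (fun d => ¬ d.Prime ∧ IsPrimePow d), Λ d / d := by
        rw [eq_comm]
        apply Finset.sum_subset
        · intro d hd
          simp only [mem_filter] at hd ⊢
          exact ⟨hd.1, hd.2.1⟩
        · intro d hd hd'
          simp only [mem_filter] at hd hd'
          have : ¬ IsPrimePow d := fun h => hd' ⟨hd.1, hd.2, h⟩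
          rw [← ArithmeticFunction.vonMangoldt_ne_zero_iff] at this
          simp only [ne_eq, not_not] at this
          rw [this, zero_div]
    _ ≤ ∑ d ∈ (Icc 2 n).biUnion fiber, Λ d / d := by
        apply Finset.sum_le_sum_of_subset_of_nonneg hsub
        intro d _ _
        have := ArithmeticFunction.vonMangoldt_nonneg (n := d)
        positivity
    _ = ∑ p ∈ Icc 2 n, ∑ d ∈ fiber p, Λ d / d := Finset.sum_biUnion hdisj
    _ ≤ ∑ p ∈ Icc 2 n, 4 * (1/(p:ℝ)^((3:ℝ)/2)) := by
        apply Finset.sum_le_sum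
        intro p hpmem
        simp only [mem_Icc] at hpmem
        by_cases hp : p.Prime
        · exact le_trans (fiber_sum hp hpmem.2) (perp p hpmem.1)
        · have : fiber p = ∅ := by
            rw [Finset.eq_empty_iff_forall_notMem]
            intro d hd
            rw [hfiber] at hd
            obtain ⟨hdi, _, hmin⟩ := Finset.mem_filter.mp hd
            obtain ⟨k, hk, rfl⟩ := Finset.mem_image.mp hdi
            have hk2 : 2 ≤ k := (Finset.mem_Icc.mp hk).1
            have hd1 : 1 < p ^ k := by
              have h2p : 2 ≤ p := hpmem.1
              calc 1 < 2^k := Nat.one_lt_two_pow (by omega)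
                _ ≤ p ^ k := Nat.pow_le_pow_left h2p k
            exact hp (hmin ▸ Nat.minFac_prime (by omega))
          rw [this]
          simp
          positivity
    _ ≤ KK := sum_rpow_le _


noncomputable def Pf (n : ℕ) : ℝ := ∑ p ∈ (Ioc 0 n).filter Nat.Prime, Real.log p / p

noncomputable def cone : ℝ := KK + Real.log 4 + 1

lemma mertens1 (n : ℕ) (hn : 1 ≤ n) : |Pf n - Real.log n| ≤ cone := by
  have hn0 : (0:ℝ) < n := by exact_mod_cast hn
  have hlog4 : (0:ℝ) ≤ Real.log 4 := Real.log_nonneg (by norm_num)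
  -- floor bounds
  have hfl : ∀ d : ℕ, 0 < d → ((n / d : ℕ) : ℝ) ≤ (n:ℝ) / d := by
    intro d hd
    exact Nat.cast_div_le.trans (by norm_num)
  have hfl2 : ∀ d : ℕ, 0 < d → (n:ℝ)/d - 1 ≤ ((n / d : ℕ) : ℝ) := by
    intro d hd
    have hd0 : (0:ℝ) < d := by exact_mod_cast hd
    have h1 : d * (n / d) + n % d = n := Nat.div_add_mod n d
    have h2 : n % d < d := Nat.mod_lt _ hd
    have h1' : (d:ℝ) * ((n/d : ℕ):ℝ) + ((n % d : ℕ):ℝ) = n := by exact_mod_cast h1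
    have h2' : ((n % d : ℕ):ℝ) < d := by exact_mod_cast h2
    rw [div_sub_one hd0.ne', div_le_iff₀ hd0]
    nlinarith
  -- split the identity
  have hsplit : ∑ d ∈ Ioc 0 n, Λ d * (n / d : ℕ)
      = (∑ p ∈ (Ioc 0 n).filter Nat.Prime, Λ p * (n / p : ℕ))
        + ∑ d ∈ (Ioc 0 n).filter (fun d => ¬ d.Prime), Λ d * (n / d : ℕ) :=
    (Finset.sum_filter_add_sum_filter_not _ _ _).symm
  -- junk bound
  have hjunk : ∑ d ∈ (Ioc 0 n).filter (fun d => ¬ d.Prime), Λ d * (n / d : ℕ) ≤ n * KK := by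
    calc ∑ d ∈ (Ioc 0 n).filter (fun d => ¬ d.Prime), Λ d * (n / d : ℕ)
        ≤ ∑ d ∈ (Ioc 0 n).filter (fun d => ¬ d.Prime), (n:ℝ) * (Λ d / d) := by
          apply Finset.sum_le_sum
          intro d hd
          simp only [mem_filter, mem_Ioc] at hd
          have hd0 : (0:ℝ) < d := by exact_mod_cast hd.1.1
          calc Λ d * ((n / d : ℕ) : ℝ) ≤ Λ d * ((n:ℝ)/d) :=
                mul_le_mul_of_nonneg_left (hfl d hd.1.1) vonMangoldt_nonneg
            _ = (n:ℝ) * (Λ d / d) := by field_simp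
      _ = (n:ℝ) * ∑ d ∈ (Ioc 0 n).filter (fun d => ¬ d.Prime), (Λ d / d) := by
          rw [Finset.mul_sum]
      _ ≤ n * KK := mul_le_mul_of_nonneg_left (lemE n) hn0.le
  have hjunk0 : 0 ≤ ∑ d ∈ (Ioc 0 n).filter (fun d => ¬ d.Prime), Λ d * (n / d : ℕ) := by
    apply Finset.sum_nonneg
    intro d _
    exact mul_nonneg vonMangoldt_nonneg (by positivity)
  -- prime sum with Λ = log
  have hprim : ∀ p ∈ (Ioc 0 n).filter Nat.Prime, Λ p * ((n / p : ℕ):ℝ) = Real.log p * (n/p : ℕ) := by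
    intro p hp
    simp only [mem_filter] at hp
    rw [vonMangoldt_apply_prime hp.2]
  have hprimsum : ∑ p ∈ (Ioc 0 n).filter Nat.Prime, Λ p * ((n / p : ℕ):ℝ)
      = ∑ p ∈ (Ioc 0 n).filter Nat.Prime, Real.log p * ((n / p : ℕ):ℝ) :=
    Finset.sum_congr rfl hprim
  -- upper bound on prime floor sum by n * Pf n
  have hub : ∑ p ∈ (Ioc 0 n).filter Nat.Prime, Real.log p * ((n / p : ℕ):ℝ) ≤ (n:ℝ) * Pf n := by
    rw [Pf, Finset.mul_sum]
    apply Finset.sum_le_sum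
    intro p hp
    simp only [mem_filter, mem_Ioc] at hp
    have hp0 : (0:ℝ) < p := by exact_mod_cast hp.1.1
    have hlp : 0 ≤ Real.log p := Real.log_nonneg (by exact_mod_cast hp.2.one_lt.le)
    calc Real.log p * ((n / p : ℕ):ℝ) ≤ Real.log p * ((n:ℝ)/p) :=
          mul_le_mul_of_nonneg_left (hfl p hp.1.1) hlp
      _ = (n:ℝ) * (Real.log p / p) := by field_simp
  -- lower bound on prime floor sum
  have hlb : (n:ℝ) * Pf n - (n:ℝ) * Real.log 4
      ≤ ∑ p ∈ (Ioc 0 n).filter Nat.Prime, Real.log p * ((n / p : ℕ):ℝ) := by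
    have : ∀ p ∈ (Ioc 0 n).filter Nat.Prime,
        (n:ℝ) * (Real.log p / p) - Real.log p ≤ Real.log p * ((n / p : ℕ):ℝ) := by
      intro p hp
      simp only [mem_filter, mem_Ioc] at hp
      have hp0 : (0:ℝ) < p := by exact_mod_cast hp.1.1
      have hlp : 0 ≤ Real.log p := Real.log_nonneg (by exact_mod_cast hp.2.one_lt.le)
      have := mul_le_mul_of_nonneg_left (hfl2 p hp.1.1) hlp
      calc (n:ℝ) * (Real.log p / p) - Real.log p = Real.log p * ((n:ℝ)/p - 1) := by
            field_simp
        _ ≤ Real.log p * ((n / p : ℕ):ℝ) := this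
    calc (n:ℝ) * Pf n - (n:ℝ) * Real.log 4
        ≤ (n:ℝ) * Pf n - ∑ p ∈ (Ioc 0 n).filter Nat.Prime, Real.log p := by
          have := lemD n; linarith
      _ = ∑ p ∈ (Ioc 0 n).filter Nat.Prime, ((n:ℝ) * (Real.log p / p) - Real.log p) := by
          rw [Finset.sum_sub_distrib, Pf, Finset.mul_sum]
      _ ≤ _ := Finset.sum_le_sum this
  -- combine
  have hTlow := lemB n
  have hThigh := lemC n
  have hid := lemA n
  rw [hsplit, hprimsum] at hid
  -- hid : T n = primesum + junk
  have hup : Pf n ≤ Real.log n + Real.log 4 := by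
    have h1 : (n:ℝ) * Pf n - (n:ℝ) * Real.log 4 ≤ (n:ℝ) * Real.log n := by
      calc (n:ℝ) * Pf n - (n:ℝ) * Real.log 4
          ≤ ∑ p ∈ (Ioc 0 n).filter Nat.Prime, Real.log p * ((n / p : ℕ):ℝ) := hlb
        _ ≤ ∑ k ∈ Ioc 0 n, Real.log k := by
            rw [hid]; linarith
        _ ≤ (n:ℝ) * Real.log n := hThigh
    have h2 : (n:ℝ) * Pf n ≤ (n:ℝ) * (Real.log n + Real.log 4) := by nlinarith
    exact le_of_mul_le_mul_left h2 hn0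
  have hlow : Real.log n - 1 - KK ≤ Pf n := by
    have h1 : (n:ℝ) * Real.log n - n - n * KK ≤ (n:ℝ) * Pf n := by
      calc (n:ℝ) * Real.log n - n - n * KK
          ≤ ∑ k ∈ Ioc 0 n, Real.log k - n * KK := by linarith
        _ ≤ ∑ p ∈ (Ioc 0 n).filter Nat.Prime, Real.log p * ((n / p : ℕ):ℝ) := by
            rw [hid]; linarith
        _ ≤ (n:ℝ) * Pf n := hub
    have h2 : (n:ℝ) * (Real.log n - 1 - KK) ≤ (n:ℝ) * Pf n := by nlinarith
    exact le_of_mul_le_mul_left h2 hn0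
  rw [abs_le, cone]
  constructor <;> nlinarith [hup, hlow, KK_nonneg, hlog4]

noncomputable def aa (k : ℕ) : ℝ := if k.Prime then Real.log k / k else 0
noncomputable def bb (k : ℕ) : ℝ := if k.Prime then 1 / (k:ℝ) else 0
noncomputable def gg (k : ℕ) : ℝ := 1 / Real.log k
noncomputable def Pf' (n : ℕ) : ℝ := ∑ k ∈ Ioc 0 n, aa k
noncomputable def Qf (n : ℕ) : ℝ := ∑ k ∈ Ioc 0 n, bb k

lemma bb_eq (k : ℕ) : bb k = aa k * gg k := by
  rw [aa, bb, gg]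
  by_cases h : k.Prime
  · simp only [h, if_true]
    have h2 : (1:ℝ) < k := by exact_mod_cast h.one_lt
    have hl : Real.log k ≠ 0 := ne_of_gt (Real.log_pos h2)
    field_simp
  · simp [h]

lemma tele (f : ℕ → ℝ) (n m : ℕ) (h : n ≤ m) :
    ∑ k ∈ Ioc n m, (f k - f (k+1)) = f (n+1) - f (m+1) := by
  induction m, h using Nat.le_induction with
  | base => simp
  | succ m hm ih =>
    rw [Finset.sum_Ioc_succ_top (by omega), ih]
    ring

lemma abelID (n m : ℕ) (h : n ≤ m) :
    ∑ k ∈ Ioc n (m+1), aa k * gg k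
      = Pf' (m+1) * gg (m+1) - Pf' n * gg (n+1)
        + ∑ k ∈ Ioc n m, Pf' k * (gg k - gg (k+1)) := by
  induction m, h using Nat.le_induction with
  | base =>
    have h1 : Ioc n (n+1) = {n+1} := by ext j; simp only [mem_Ioc, mem_singleton]; omega
    have h2 : Pf' (n+1) = Pf' n + aa (n+1) := by
      rw [Pf', Pf', Finset.sum_Ioc_succ_top (Nat.zero_le _)]
    rw [h1]
    simp [h2]
    ring
  | succ m hm ih =>
    have e1 := Finset.sum_Ioc_succ_top (show n ≤ m+1 by omega) (fun k => aa k * gg k)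
    have e2 := Finset.sum_Ioc_succ_top (show n ≤ m by omega) (fun k => Pf' k * (gg k - gg (k+1)))
    have h2 : Pf' (m+1+1) = Pf' (m+1) + aa (m+1+1) := by
      rw [Pf', Pf', Finset.sum_Ioc_succ_top (Nat.zero_le _)]
    rw [e1, ih, e2, h2]
    ring

lemma log_ge_one {k : ℕ} (hk : 3 ≤ k) : 1 ≤ Real.log k := by
  have h1 : Real.exp 1 ≤ 3 := by
    have := Real.exp_one_lt_d9
    linarith
  have h2 : (3:ℝ) ≤ k := by exact_mod_cast hk
  calc (1:ℝ) = Real.log (Real.exp 1) := (Real.log_exp 1).symm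
    _ ≤ Real.log k := Real.log_le_log (Real.exp_pos 1) (le_trans h1 h2)

lemma log_lt_log_succ {k : ℕ} (hk : 1 ≤ k) : Real.log k < Real.log (k+1) := by
  have h0 : (0:ℝ) < k := by exact_mod_cast hk
  have : (k:ℝ) < (k:ℝ)+1 := by linarith
  exact Real.log_lt_log h0 this

lemma delta_le {k : ℕ} (hk : 1 ≤ k) : Real.log (k+1) - Real.log k ≤ 1/k := by
  have h0 : (0:ℝ) < k := by exact_mod_cast hk
  have h1 : Real.log (((k:ℝ)+1)/k) ≤ ((k:ℝ)+1)/k - 1 :=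
    Real.log_le_sub_one_of_pos (by positivity)
  rw [Real.log_div (by positivity) h0.ne'] at h1
  have h2 : ((k:ℝ)+1)/k - 1 = 1/k := by field_simp; ring
  linarith [h2 ▸ h1]

lemma gg_succ_eq {k : ℕ} : gg (k+1) = 1 / Real.log ((k:ℝ)+1) := by
  rw [gg]; push_cast; ring_nf

lemma ww_nonneg {k : ℕ} (hk : 3 ≤ k) : 0 ≤ gg k - gg (k+1) := by
  have hL : 1 ≤ Real.log k := log_ge_one hk
  have hLL : Real.log k < Real.log (k+1) := log_lt_log_succ (by omega)
  rw [gg, gg_succ_eq, sub_nonneg]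
  apply div_le_div_of_nonneg_left (by norm_num) (by linarith) hLL.le

lemma ww_le_gg {k : ℕ} (hk : 3 ≤ k) : gg k - gg (k+1) ≤ gg k := by
  have hL : 1 ≤ Real.log k := log_ge_one hk
  have hLL : Real.log k < Real.log ((k:ℝ)+1) := log_lt_log_succ (by omega)
  have h0 : 0 ≤ gg (k+1) := by
    rw [gg_succ_eq]
    have h' : 0 < Real.log ((k:ℝ)+1) := by linarith
    positivity
  linarith

-- fact3 : 0 ≤ vv k - u k ≤ w k  where u k = log k * (gg k - gg (k+1)),
-- vv k = log log (k+1) - log log k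
lemma fact3 {k : ℕ} (hk : 3 ≤ k) :
    0 ≤ (Real.log (Real.log ((k:ℝ)+1)) - Real.log (Real.log k))
        - Real.log k * (gg k - gg (k+1))
    ∧ (Real.log (Real.log ((k:ℝ)+1)) - Real.log (Real.log k))
        - Real.log k * (gg k - gg (k+1)) ≤ gg k - gg (k+1) := by
  have hL : 1 ≤ Real.log k := log_ge_one hk
  have hL0 : 0 < Real.log k := by linarith
  have hLL : Real.log k < Real.log ((k:ℝ)+1) := log_lt_log_succ (by omega)
  have hL'0 : 0 < Real.log ((k:ℝ)+1) := by linarith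
  set L := Real.log k with hLdef
  set L' := Real.log ((k:ℝ)+1) with hL'def
  have hgg : gg k - gg (k+1) = 1/L - 1/L' := by rw [gg, gg_succ_eq]
  have hu : L * (gg k - gg (k+1)) = (L' - L) / L' := by
    rw [hgg]
    field_simp
  have hdelta : L' - L ≤ 1 := by
    have h1 := delta_le (show 1 ≤ k by omega)
    have hk0 : (0:ℝ) < k := by exact_mod_cast (show 0 < k by omega)
    have h2 : (1:ℝ)/k ≤ 1 := by
      rw [div_le_one hk0]
      exact_mod_cast (show 1 ≤ k by omega)
    push_cast at h1
    linarith
  constructor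
  · -- lower : v ≥ u
    have h1 : Real.log (L/L') ≤ L/L' - 1 := Real.log_le_sub_one_of_pos (by positivity)
    rw [Real.log_div hL0.ne' hL'0.ne'] at h1
    rw [hu]
    have h2 : (L' - L)/L' = 1 - L/L' := by field_simp
    rw [h2]
    linarith
  · -- upper : v - u ≤ w
    have h1 : Real.log (L'/L) ≤ L'/L - 1 := Real.log_le_sub_one_of_pos (by positivity)
    rw [Real.log_div hL'0.ne' hL0.ne'] at h1
    rw [hu, hgg]
    have h2 : (L'/L - 1) - (L' - L)/L' = (L' - L) * (1/L - 1/L') := by field_simp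
    have h3 : (L' - L) * (1/L - 1/L') ≤ 1 * (1/L - 1/L') := by
      apply mul_le_mul_of_nonneg_right hdelta
      have : 1/L' ≤ 1/L := div_le_div_of_nonneg_left (by norm_num) hL0 hLL.le
      linarith
    linarith

lemma Pf'_eq_Pf (n : ℕ) : Pf' n = Pf n := by
  rw [Pf', Pf, Finset.sum_filter]
  exact Finset.sum_congr rfl fun k _ => by rw [aa]

lemma cone_ge_one : 1 ≤ cone := by
  rw [cone]
  have := KK_nonneg
  have : (0:ℝ) ≤ Real.log 4 := Real.log_nonneg (by norm_num)
  linarith [KK_nonneg]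

lemma mert1 : ∀ n : ℕ, 1 ≤ n → |Pf' n - Real.log n| ≤ cone := by
  intro n hn
  rw [Pf'_eq_Pf]
  exact mertens1 n hn

noncomputable def vv (k : ℕ) : ℝ := Real.log (Real.log (k+1:ℕ)) - Real.log (Real.log k)
noncomputable def dd (n : ℕ) : ℝ := Qf n - Real.log (Real.log n)

lemma vv_eq (k : ℕ) : vv k = Real.log (Real.log ((k:ℝ)+1)) - Real.log (Real.log k) := by
  rw [vv]; push_cast; ring_nf

lemma gg_pos {k : ℕ} (hk : 3 ≤ k) : 0 < gg k := by
  rw [gg]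
  have := log_ge_one hk
  positivity

lemma gg_mono {a b : ℕ} (ha : 3 ≤ a) (hab : a ≤ b) : gg b ≤ gg a := by
  rw [gg, gg]
  have h1 : 1 ≤ Real.log a := log_ge_one ha
  have h2 : Real.log a ≤ Real.log b := by
    apply Real.log_le_log (by positivity)
    exact_mod_cast hab
  apply div_le_div_of_nonneg_left (by norm_num) (by linarith) h2

lemma cauchy_est (n m : ℕ) (hn : 3 ≤ n) (hnm : n ≤ m) :
    |dd m - dd n| ≤ (3*cone + 2) * gg n := by
  have hcone0 : (0:ℝ) ≤ cone := le_trans zero_le_one cone_ge_one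
  have hggn : 0 < gg n := gg_pos hn
  rcases eq_or_lt_of_le hnm with rfl | hlt
  · simp
    positivity
  obtain ⟨m', rfl⟩ : ∃ m', m = m' + 1 := ⟨m - 1, by omega⟩
  have hnm' : n ≤ m' := by omega
  -- increments
  have hQ : Qf (m'+1) - Qf n = ∑ k ∈ Ioc n (m'+1), bb k := by
    rw [Qf, Qf, ← Finset.sum_Ioc_consecutive _ (Nat.zero_le n) (by omega : n ≤ m'+1)]
    ring
  have hbb : ∑ k ∈ Ioc n (m'+1), bb k = ∑ k ∈ Ioc n (m'+1), aa k * gg k :=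
    Finset.sum_congr rfl (fun k _ => bb_eq k)
  have hID := abelID n m' hnm'
  -- pointwise decomposition of the middle sum
  have hdecomp : ∀ k, Pf' k * (gg k - gg (k+1))
      = (Pf' k - Real.log k) * (gg k - gg (k+1)) + vv k
        - (vv k - Real.log k * (gg k - gg (k+1))) := by
    intro k; ring
  have hsum : ∑ k ∈ Ioc n m', Pf' k * (gg k - gg (k+1))
      = (∑ k ∈ Ioc n m', (Pf' k - Real.log k) * (gg k - gg (k+1)))
        + (∑ k ∈ Ioc n m', vv k)
        - ∑ k ∈ Ioc n m', (vv k - Real.log k * (gg k - gg (k+1))) := by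
    rw [← Finset.sum_add_distrib, ← Finset.sum_sub_distrib]
    exact Finset.sum_congr rfl (fun k _ => hdecomp k)
  -- telescopes
  have htelw : ∑ k ∈ Ioc n m', (gg k - gg (k+1)) = gg (n+1) - gg (m'+1) :=
    tele gg n m' hnm'
  have htelv : ∑ k ∈ Ioc n m', vv k
      = Real.log (Real.log (m'+1:ℕ)) - Real.log (Real.log (n+1:ℕ)) := by
    have := tele (fun k => -(Real.log (Real.log k))) n m' hnm'
    simp only [neg_sub_neg] at this
    rw [show ∑ k ∈ Ioc n m', vv k
        = ∑ k ∈ Ioc n m', (Real.log (Real.log (k+1:ℕ)) - Real.log (Real.log k)) from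
      Finset.sum_congr rfl (fun k _ => by rw [vv])]
    rw [show ∑ k ∈ Ioc n m', (Real.log (Real.log (k+1:ℕ)) - Real.log (Real.log k))
        = ∑ k ∈ Ioc n m', (-(Real.log (Real.log ((k:ℕ)))) - -(Real.log (Real.log ((k+1:ℕ))))) from
      Finset.sum_congr rfl (fun k _ => by ring)]
    rw [tele (fun k => -(Real.log (Real.log k))) n m' hnm']
    ring
  -- bounds on the three sums
  have hk3 : ∀ k, k ∈ Ioc n m' → 3 ≤ k := by
    intro k hk
    simp only [mem_Ioc] at hk
    omega
  have hS1 : |∑ k ∈ Ioc n m', (Pf' k - Real.log k) * (gg k - gg (k+1))|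
      ≤ cone * (gg (n+1) - gg (m'+1)) := by
    calc |∑ k ∈ Ioc n m', (Pf' k - Real.log k) * (gg k - gg (k+1))|
        ≤ ∑ k ∈ Ioc n m', |(Pf' k - Real.log k) * (gg k - gg (k+1))| :=
          Finset.abs_sum_le_sum_abs _ _
      _ ≤ ∑ k ∈ Ioc n m', cone * (gg k - gg (k+1)) := by
          apply Finset.sum_le_sum
          intro k hk
          have h3 := hk3 k hk
          rw [abs_mul, abs_of_nonneg (ww_nonneg h3)]
          exact mul_le_mul_of_nonneg_right (mert1 k (by omega)) (ww_nonneg h3)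
      _ = cone * (gg (n+1) - gg (m'+1)) := by rw [← Finset.mul_sum, htelw]
  have hS3a : 0 ≤ ∑ k ∈ Ioc n m', (vv k - Real.log k * (gg k - gg (k+1))) := by
    apply Finset.sum_nonneg
    intro k hk
    have := (fact3 (hk3 k hk)).1
    rw [vv_eq]
    linarith
  have hS3b : ∑ k ∈ Ioc n m', (vv k - Real.log k * (gg k - gg (k+1)))
      ≤ gg (n+1) - gg (m'+1) := by
    rw [← htelw]
    apply Finset.sum_le_sum
    intro k hk
    have := (fact3 (hk3 k hk)).2
    rw [vv_eq]
    linarith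
  -- the R terms
  have hRm := mert1 (m'+1) (by omega)
  have hRn := mert1 n (by omega)
  have hggm : 0 < gg (m'+1) := gg_pos (by omega)
  have hggn1 : 0 < gg (n+1) := gg_pos (by omega)
  have hggmono : gg (m'+1) ≤ gg n := gg_mono hn (by omega)
  have hggmono1 : gg (n+1) ≤ gg n := gg_mono hn (by omega)
  -- log * gg = 1
  have hlgm : Real.log (m'+1:ℕ) * gg (m'+1) = 1 := by
    rw [gg]
    have h1 : 1 ≤ Real.log (m'+1:ℕ) := log_ge_one (by omega)
    rw [mul_one_div]
    exact div_self (by linarith)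
  have hlgn : Real.log n * gg n = 1 := by
    rw [gg]
    have h1 : 1 ≤ Real.log n := log_ge_one hn
    rw [mul_one_div]
    exact div_self (by linarith)
  -- fact3 at n
  have hf3n := fact3 hn
  have hvvn := vv_eq n
  -- assemble
  have hdd : dd (m'+1) - dd n
      = (Real.log n * (gg n - gg (n+1)) - vv n)
        + (Pf' (m'+1) - Real.log (m'+1:ℕ)) * gg (m'+1)
        - (Pf' n - Real.log n) * gg (n+1)
        + (∑ k ∈ Ioc n m', (Pf' k - Real.log k) * (gg k - gg (k+1)))
        - ∑ k ∈ Ioc n m', (vv k - Real.log k * (gg k - gg (k+1))) := by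
    rw [dd, dd]
    rw [show Qf (m'+1) = Qf n + (Qf (m'+1) - Qf n) by ring, hQ, hbb, hID, hsum, htelv]
    rw [vv]
    linear_combination hlgm - hlgn
  -- two-sided bounds
  have hwn := ww_nonneg hn
  have hwle := ww_le_gg hn
  have ht1 : |Real.log n * (gg n - gg (n+1)) - vv n| ≤ gg n := by
    rw [abs_le]
    rw [hvvn]
    constructor
    · have := hf3n.2; linarith
    · have := hf3n.1; linarith
  have ht2 : |(Pf' (m'+1) - Real.log (m'+1:ℕ)) * gg (m'+1)| ≤ cone * gg n := by
    rw [abs_mul, abs_of_pos hggm]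
    calc |Pf' (m'+1) - Real.log (m'+1:ℕ)| * gg (m'+1) ≤ cone * gg (m'+1) :=
          mul_le_mul_of_nonneg_right hRm hggm.le
      _ ≤ cone * gg n := mul_le_mul_of_nonneg_left hggmono hcone0
  have ht3 : |(Pf' n - Real.log n) * gg (n+1)| ≤ cone * gg n := by
    rw [abs_mul, abs_of_pos hggn1]
    calc |Pf' n - Real.log n| * gg (n+1) ≤ cone * gg (n+1) :=
          mul_le_mul_of_nonneg_right hRn hggn1.le
      _ ≤ cone * gg n := mul_le_mul_of_nonneg_left hggmono1 hcone0
  have hS1' : |∑ k ∈ Ioc n m', (Pf' k - Real.log k) * (gg k - gg (k+1))| ≤ cone * gg n := by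
    refine le_trans hS1 ?_
    have : gg (n+1) - gg (m'+1) ≤ gg n := by linarith
    exact mul_le_mul_of_nonneg_left this hcone0
  have hS3' : |∑ k ∈ Ioc n m', (vv k - Real.log k * (gg k - gg (k+1)))| ≤ gg n := by
    rw [abs_of_nonneg hS3a]
    linarith
  rw [hdd, abs_le]
  obtain ⟨a1, a2⟩ := abs_le.mp ht1
  obtain ⟨b1, b2⟩ := abs_le.mp ht2
  obtain ⟨c1, c2⟩ := abs_le.mp ht3
  obtain ⟨d1, d2⟩ := abs_le.mp hS1'
  obtain ⟨e1, e2⟩ := abs_le.mp hS3'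
  constructor <;> linarith [hggn.le]

lemma exists_M : ∃ M : ℝ, Tendsto (fun j : ℕ => dd (j+3)) atTop (nhds M) := by
  apply cauchySeq_tendsto_of_complete
  apply cauchySeq_of_le_tendsto_0 (fun N : ℕ => (3*cone+2) * gg (N+3))
  · intro i j N hi hj
    have hest : ∀ a b : ℕ, N ≤ a → a ≤ b → dist (dd (a+3)) (dd (b+3)) ≤ (3*cone+2) * gg (N+3) := by
      intro a b ha hab
      rw [Real.dist_eq, abs_sub_comm]
      calc |dd (b+3) - dd (a+3)| ≤ (3*cone+2) * gg (a+3) :=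
            cauchy_est (a+3) (b+3) (by omega) (by omega)
        _ ≤ (3*cone+2) * gg (N+3) := by
            apply mul_le_mul_of_nonneg_left (gg_mono (by omega) (by omega))
            have := cone_ge_one; linarith
    rcases le_total i j with h | h
    · exact hest i j hi h
    · rw [dist_comm]; exact hest j i hj h
  · have h1 : Tendsto (fun N : ℕ => ((N+3:ℕ):ℝ)) atTop atTop := by
      apply tendsto_natCast_atTop_atTop.comp
      exact tendsto_add_atTop_nat 3
    have h2 : Tendsto (fun N : ℕ => Real.log ((N+3:ℕ):ℝ)) atTop atTop :=
      Real.tendsto_log_atTop.comp h1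
    have h3 : Tendsto (fun N : ℕ => (Real.log ((N+3:ℕ):ℝ))⁻¹) atTop (nhds 0) :=
      h2.inv_tendsto_atTop
    have h4 := h3.const_mul (3*cone+2)
    rw [mul_zero] at h4
    convert h4 using 2 with N
    rw [gg, one_div]

lemma dd_close (M : ℝ) (hM : Tendsto (fun j : ℕ => dd (j+3)) atTop (nhds M))
    (n : ℕ) (hn : 3 ≤ n) : |dd n - M| ≤ (3*cone+2) * gg n := by
  have h : Tendsto (fun j : ℕ => |dd n - dd (j+3)|) atTop (nhds |dd n - M|) :=
    (tendsto_const_nhds.sub hM).abs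
  apply le_of_tendsto h
  filter_upwards [eventually_ge_atTop n] with j hj
  rw [abs_sub_comm]
  exact cauchy_est n (j+3) hn (by omega)

lemma Qf_eq (n : ℕ) : ∑ p ∈ (Finset.Iic n).filter Nat.Prime, (1 : ℝ) / p = Qf n := by
  rw [Qf]
  have h1 : (Finset.Iic n).filter Nat.Prime = (Ioc 0 n).filter Nat.Prime := by
    ext a
    simp only [mem_filter, Finset.mem_Iic, mem_Ioc]
    exact ⟨fun ⟨h, hp⟩ => ⟨⟨hp.pos, h⟩, hp⟩, fun ⟨⟨_, h⟩, hp⟩ => ⟨h, hp⟩⟩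
  rw [h1, Finset.sum_filter]
  exact Finset.sum_congr rfl fun k _ => by rw [bb]

theorem stmt_14' :
    ∃ M : ℝ,
      Tendsto (fun x : ℝ =>
          (∑ p ∈ (Finset.Iic ⌊x⌋₊).filter Nat.Prime, (1 : ℝ) / p) - Real.log (Real.log x))
        atTop (nhds M) ∧
      ∃ C > 0, ∀ x : ℝ, 3 ≤ x →
        |(∑ p ∈ (Finset.Iic ⌊x⌋₊).filter Nat.Prime, (1 : ℝ) / p) -
            Real.log (Real.log x) - M| ≤ C / Real.log x := by
  obtain ⟨M, hM⟩ := exists_M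
  have hcone0 : (0:ℝ) ≤ cone := le_trans zero_le_one cone_ge_one
  set C : ℝ := 2*(3*cone+2) + 2 with hC
  have hCpos : 0 < C := by rw [hC]; linarith
  have main : ∀ x : ℝ, 3 ≤ x →
      |(∑ p ∈ (Finset.Iic ⌊x⌋₊).filter Nat.Prime, (1 : ℝ) / p) -
          Real.log (Real.log x) - M| ≤ C / Real.log x := by
    intro x hx
    set n := ⌊x⌋₊ with hn
    have hn3 : 3 ≤ n := Nat.le_floor (by exact_mod_cast hx)
    have hnx : (n:ℝ) ≤ x := Nat.floor_le (by linarith)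
    have hxn1 : x < n+1 := Nat.lt_floor_add_one x
    have hlogn : 1 ≤ Real.log n := log_ge_one hn3
    have hn0 : (0:ℝ) < n := by positivity
    have hlognx : Real.log n ≤ Real.log x := Real.log_le_log hn0 hnx
    have hlogx1 : 1 ≤ Real.log x := le_trans hlogn hlognx
    have hdelta : Real.log ((n:ℝ)+1) - Real.log n ≤ 1/n := delta_le (by omega)
    have hlogxn1 : Real.log x ≤ Real.log ((n:ℝ)+1) := Real.log_le_log (by linarith) hxn1.le
    have hinv : (1:ℝ)/n ≤ 1 := by
      rw [div_le_one hn0]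
      exact_mod_cast (show 1 ≤ n by omega)
    have key1 : Real.log x ≤ 2 * Real.log n := by linarith
    -- log log comparison
    have key2a : Real.log (Real.log n) ≤ Real.log (Real.log x) :=
      Real.log_le_log (by linarith) hlognx
    have key2b : Real.log (Real.log x) - Real.log (Real.log n) ≤ 1/Real.log n := by
      have h1 : Real.log (Real.log x / Real.log n) ≤ Real.log x / Real.log n - 1 :=
        Real.log_le_sub_one_of_pos (by positivity)
      rw [Real.log_div (by linarith) (by linarith)] at h1
      have h2 : Real.log x / Real.log n - 1 = (Real.log x - Real.log n)/Real.log n := by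
        field_simp
      rw [h2] at h1
      have h3 : (Real.log x - Real.log n)/Real.log n ≤ 1/Real.log n := by
        apply div_le_div_of_nonneg_right ?_ (by linarith)
        linarith
      linarith
    have hclose := dd_close M hM n hn3
    rw [Qf_eq]
    have hggn : gg n = 1/Real.log n := by rw [gg]
    have habs : |Qf n - Real.log (Real.log x) - M|
        ≤ |dd n - M| + (Real.log (Real.log x) - Real.log (Real.log n)) := by
      have e : Qf n - Real.log (Real.log x) - M
          = (dd n - M) - (Real.log (Real.log x) - Real.log (Real.log n)) := by
        rw [dd]; ring
      rw [e, sub_eq_add_neg]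
      refine (abs_add_le _ _).trans ?_
      rw [abs_neg, abs_of_nonneg (by linarith : (0:ℝ) ≤ Real.log (Real.log x) - Real.log (Real.log n))]
    calc |Qf n - Real.log (Real.log x) - M|
        ≤ |dd n - M| + (Real.log (Real.log x) - Real.log (Real.log n)) := habs
      _ ≤ (3*cone+2) * (1/Real.log n) + 1/Real.log n := by
          rw [← hggn]
          have := key2b
          rw [hggn] at hclose ⊢
          linarith [hclose]
      _ ≤ C / Real.log x := by
          have h1 : (1:ℝ)/Real.log n ≤ 2/Real.log x := by
            rw [div_le_div_iff₀ (by linarith) (by linarith)]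
            linarith
          have h2 : (3*cone+2) * (1/Real.log n) + 1/Real.log n
              = ((3*cone+2) + 1) * (1/Real.log n) := by ring
          rw [h2]
          calc ((3*cone+2) + 1) * (1/Real.log n) ≤ ((3*cone+2) + 1) * (2/Real.log x) := by
                apply mul_le_mul_of_nonneg_left h1 (by linarith)
            _ = C / Real.log x := by rw [hC]; ring
  refine ⟨M, ?_, C, hCpos, main⟩
  -- Tendsto
  have hzero : Tendsto (fun x : ℝ => C / Real.log x) atTop (nhds 0) := by
    simp only [div_eq_mul_inv]
    have h4 := (Real.tendsto_log_atTop.inv_tendsto_atTop).const_mul C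
    rwa [mul_zero] at h4
  have hsq : Tendsto (fun x : ℝ =>
      ((∑ p ∈ (Finset.Iic ⌊x⌋₊).filter Nat.Prime, (1 : ℝ) / p) - Real.log (Real.log x)) - M)
      atTop (nhds 0) := by
    apply squeeze_zero_norm' _ hzero
    filter_upwards [eventually_ge_atTop (3:ℝ)] with x hx
    exact main x hx
  have := hsq.add_const M
  simpa using this

end Stmt14Aux

/-- Mertens' second theorem with error term `O(1/log x)`; the constant `M`
(the Meissel–Mertens constant) is characterized as the limit of
`Σ_{p ≤ x} 1/p - log log x`. -/
theorem stmt_14 :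
    ∃ M : ℝ,
      Tendsto (fun x : ℝ =>
          (∑ p ∈ (Finset.Iic ⌊x⌋₊).filter Nat.Prime, (1 : ℝ) / p) - Real.log (Real.log x))
        atTop (nhds M) ∧
      ∃ C > 0, ∀ x : ℝ, 3 ≤ x →
        |(∑ p ∈ (Finset.Iic ⌊x⌋₊).filter Nat.Prime, (1 : ℝ) / p) -
            Real.log (Real.log x) - M| ≤ C / Real.log x := by
  exact Stmt14Aux.stmt_14'
end

section
/- As x → ∞, Σ_{p ≤ x, p prime} (log p)/p ~ log x. -/
open Filter Finset

private lemma mertens_log_factorial (N : ℕ) :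
    Real.log (Nat.factorial N) = ∑ p ∈ (Iic N).filter Nat.Prime,
      ((Nat.factorial N).factorization p : ℝ) * Real.log p := by
  have hsub : (Nat.factorial N).primeFactors ⊆ (Iic N).filter Nat.Prime := by
    intro p hp
    obtain ⟨hp1, hp2, _⟩ := Nat.mem_primeFactors.mp hp
    simp only [mem_filter, mem_Iic]
    exact ⟨(Nat.Prime.dvd_factorial hp1).mp hp2, hp1⟩
  have h1 : Real.log (Nat.factorial N)
      = ∑ p ∈ (Nat.factorial N).primeFactors, ((Nat.factorial N).factorization p : ℝ) * Real.log p := by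
    conv_lhs => rw [← Nat.factorization_prod_pow_eq_self (Nat.factorial_ne_zero N)]
    rw [Nat.prod_factorization_eq_prod_primeFactors, Nat.cast_prod, Real.log_prod]
    · refine Finset.sum_congr rfl fun p hp => ?_
      push_cast
      rw [Real.log_pow]
    · intro p hp
      have := (Nat.prime_of_mem_primeFactors hp).pos
      positivity
  rw [h1]
  refine Finset.sum_subset hsub fun p _ hnp => ?_
  have : (Nat.factorial N).factorization p = 0 := by
    by_contra h
    exact hnp (by rw [← Nat.support_factorization]; exact Finsupp.mem_support_iff.mpr h)
  simp [this]

private lemma mertens_inner_geom (N p : ℕ) (hp : 2 ≤ p) :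
    (∑ i ∈ Ico 2 (N+1), ((N / p ^ i : ℕ) : ℝ)) ≤ 2 * N / (p:ℝ)^2 := by
  have hp0 : (0:ℝ) < p := by positivity
  have hr : (0:ℝ) ≤ 1/(p:ℝ) := by positivity
  have hr1 : (1:ℝ)/(p:ℝ) < 1 := by
    rw [div_lt_one hp0]; exact_mod_cast hp.trans_lt' one_lt_two
  have h2 : (1 - 1/(p:ℝ))⁻¹ ≤ 2 := by
    rw [inv_le_iff_one_le_mul₀ (by linarith)]
    have : (1:ℝ)/p ≤ 1/2 := by
      apply div_le_div_of_nonneg_left (by norm_num) (by norm_num)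
      exact_mod_cast hp
    linarith
  have hgeom : ∀ n : ℕ, (∑ j ∈ range n, (1/(p:ℝ))^j) ≤ (1 - 1/(p:ℝ))⁻¹ := fun n => by
    rw [← tsum_geometric_of_lt_one hr hr1]
    exact Summable.sum_le_tsum (range n) (fun i _ => by positivity)
      (summable_geometric_of_lt_one hr hr1)
  calc (∑ i ∈ Ico 2 (N+1), ((N / p ^ i : ℕ) : ℝ))
      ≤ ∑ i ∈ Ico 2 (N+1), (N : ℝ) * (1/(p:ℝ))^i := by
        refine Finset.sum_le_sum fun i _ => ?_
        rw [div_pow, one_pow, mul_one_div, ← Nat.cast_pow]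
        exact Nat.cast_div_le
    _ = (N:ℝ) * ∑ j ∈ range (N+1-2), (1/(p:ℝ))^(2+j) := by
        rw [← Finset.mul_sum, Finset.sum_Ico_eq_sum_range]
    _ ≤ (N:ℝ) * ((1/(p:ℝ))^2 * (1 - 1/(p:ℝ))⁻¹) := by
        refine mul_le_mul_of_nonneg_left ?_ (by positivity)
        have he : ∀ j, (1/(p:ℝ))^(2+j) = (1/(p:ℝ))^2 * (1/(p:ℝ))^j := fun j => by ring
        simp_rw [he, ← Finset.mul_sum]
        exact mul_le_mul_of_nonneg_left (hgeom _) (by positivity)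
    _ ≤ 2 * N / (p:ℝ)^2 := by
        rw [div_pow, one_pow]
        calc (N:ℝ) * (1/(p:ℝ)^2 * (1 - 1/(p:ℝ))⁻¹) ≤ (N:ℝ) * (1/(p:ℝ)^2 * 2) :=
              mul_le_mul_of_nonneg_left (mul_le_mul_of_nonneg_left h2 (by positivity)) (by positivity)
          _ = 2 * N / (p:ℝ)^2 := by ring

private lemma mertens_summable : Summable (fun n : ℕ => Real.log n / (n:ℝ)^2) := by
  have h32 : Summable (fun n : ℕ => ((n:ℝ) ^ ((3:ℝ)/2))⁻¹) :=
    Real.summable_nat_rpow_inv.mpr (by norm_num)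
  refine Summable.of_nonneg_of_le (fun n => ?_) (fun n => ?_) (h32.mul_left 2)
  · rcases Nat.eq_zero_or_pos n with h | h
    · simp [h]
    · have : (1:ℝ) ≤ n := by exact_mod_cast h
      positivity
  · rcases Nat.lt_or_ge n 1 with h | h
    · interval_cases n; simp
    · have hn1 : (1:ℝ) ≤ (n:ℝ) := by exact_mod_cast h
      have hn0 : (0:ℝ) < n := by linarith
      have hlog : Real.log n ≤ 2 * (n:ℝ) ^ ((1:ℝ)/2) := by
        have hs : (0:ℝ) < (n:ℝ) ^ ((1:ℝ)/2) := Real.rpow_pos_of_pos hn0 _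
        have := Real.log_le_sub_one_of_pos hs
        have hlg : Real.log ((n:ℝ) ^ ((1:ℝ)/2)) = (1/2) * Real.log n := Real.log_rpow hn0 _
        nlinarith [Real.rpow_nonneg hn0.le ((1:ℝ)/2)]
      calc Real.log n / (n:ℝ)^2 ≤ (2 * (n:ℝ) ^ ((1:ℝ)/2)) / (n:ℝ)^2 :=
            div_le_div_of_nonneg_right hlog (by positivity) |>.trans_eq rfl
        _ = 2 * ((n:ℝ) ^ ((3:ℝ)/2))⁻¹ := by
            rw [mul_div_assoc, ← Real.rpow_natCast (n:ℝ) 2, ← Real.rpow_sub hn0,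
              ← Real.rpow_neg hn0.le]
            norm_num

private lemma mertens_primorial_log (N : ℕ) :
    ∑ p ∈ (Iic N).filter Nat.Prime, Real.log p ≤ N * Real.log 4 := by
  have h1 : ∑ p ∈ (Iic N).filter Nat.Prime, Real.log p = Real.log (primorial N) := by
    rw [primorial, ← Real.log_prod]
    · rw [Nat.cast_prod]
      congr 1
      · congr 1
        ext p
        simp [Nat.lt_succ_iff]
    · intro p hp
      simp only [mem_filter] at hp
      exact_mod_cast hp.2.pos.ne'
  rw [h1]
  calc Real.log (primorial N) ≤ Real.log ((4:ℕ)^N) := by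
        apply Real.log_le_log (by exact_mod_cast (primorial_pos N))
        exact_mod_cast primorial_le_4_pow N
    _ = N * Real.log 4 := by push_cast; rw [Real.log_pow]

private lemma mertens_fact_bounds (N : ℕ) (hN : 1 ≤ N) :
    (N:ℝ) * Real.log N - N ≤ Real.log (Nat.factorial N) ∧
    Real.log (Nat.factorial N) ≤ (N:ℝ) * Real.log N := by
  have hfac : (0:ℝ) < (Nat.factorial N : ℝ) := by exact_mod_cast (Nat.factorial_pos N)
  have hNr : (1:ℝ) ≤ (N:ℝ) := by exact_mod_cast hN
  constructor
  · have h := Real.pow_div_factorial_le_exp (x := (N:ℝ)) (by positivity) N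
    rw [div_le_iff₀ hfac] at h
    have := Real.log_le_log (by positivity) h
    rw [Real.log_mul (Real.exp_ne_zero _) hfac.ne', Real.log_exp, Real.log_pow] at this
    linarith
  · have h : (Nat.factorial N : ℝ) ≤ (N:ℝ)^N := by
      exact_mod_cast Nat.factorial_le_pow N
    have := Real.log_le_log hfac h
    rwa [Real.log_pow] at this

private lemma mertens_main : ∃ C : ℝ, 0 ≤ C ∧ ∀ N : ℕ, 1 ≤ N →
    |(∑ p ∈ (Iic N).filter Nat.Prime, Real.log p / p) - Real.log N| ≤ C := by
  set c : ℝ := ∑' n : ℕ, Real.log n / (n:ℝ)^2 with hc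
  have hc0 : 0 ≤ c := tsum_nonneg fun n => by
    rcases Nat.eq_zero_or_pos n with h | h
    · simp [h]
    · have : (1:ℝ) ≤ n := by exact_mod_cast h
      positivity
  have hlog4 : 0 ≤ Real.log 4 := Real.log_nonneg (by norm_num)
  refine ⟨Real.log 4 + 1 + 2 * c, by linarith, fun N hN => ?_⟩
  set P := (Iic N).filter Nat.Prime with hP
  have hprime : ∀ p ∈ P, p.Prime := fun p hp => (mem_filter.mp hp).2
  have hp2 : ∀ p ∈ P, 2 ≤ p := fun p hp => (hprime p hp).two_le
  have hNr : (1:ℝ) ≤ (N:ℝ) := by exact_mod_cast hN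
  set S : ℝ := ∑ p ∈ P, Real.log p / p with hS
  set θ : ℝ := ∑ p ∈ P, Real.log p with hθ
  set A : ℝ := ∑ p ∈ P, ((N / p : ℕ) : ℝ) * Real.log p with hA
  set B : ℝ := ∑ p ∈ P, (∑ i ∈ Ico 2 (N+1), ((N / p ^ i : ℕ) : ℝ)) * Real.log p with hB
  set T : ℝ := Real.log (Nat.factorial N) with hT
  -- T = A + B
  have hTAB : T = A + B := by
    rw [hT, mertens_log_factorial N, ← Finset.sum_add_distrib]
    refine Finset.sum_congr rfl fun p hp => ?_
    have hpp := hprime p hp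
    haveI : Fact p.Prime := ⟨hpp⟩
    have hleg : (Nat.factorial N).factorization p = ∑ i ∈ Ico 1 (N+1), N / p ^ i := by
      rw [Nat.factorization_def _ hpp]
      exact padicValNat_factorial (Nat.lt_succ_of_le (Nat.log_le_self p N))
    rw [hleg]
    have hsplit : ∑ i ∈ Ico 1 (N+1), N / p ^ i
        = N / p ^ 1 + ∑ i ∈ Ico 2 (N+1), N / p ^ i := by
      rw [← Finset.insert_Ico_add_one_left_eq_Ico (by omega : 1 < N + 1), Finset.sum_insert (by simp)]
      rfl
    rw [hsplit, pow_one]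
    push_cast
    ring
  -- bounds on terms
  have hlogp_nonneg : ∀ p ∈ P, 0 ≤ Real.log p := fun p hp =>
    Real.log_nonneg (by exact_mod_cast (hprime p hp).one_lt.le)
  have hfloor : ∀ p ∈ P, ((N / p : ℕ) : ℝ) = (⌊(N:ℝ)/(p:ℝ)⌋₊ : ℝ) := fun p hp => by
    rw [Nat.floor_div_natCast (N:ℝ) p, Nat.floor_natCast]
  -- A ≤ N * S
  have hANS : A ≤ (N:ℝ) * S := by
    rw [hA, hS, Finset.mul_sum]
    refine Finset.sum_le_sum fun p hp => ?_
    have hppos : (0:ℝ) < p := by exact_mod_cast (hprime p hp).pos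
    rw [hfloor p hp]
    calc (⌊(N:ℝ)/(p:ℝ)⌋₊ : ℝ) * Real.log p ≤ ((N:ℝ)/(p:ℝ)) * Real.log p :=
          mul_le_mul_of_nonneg_right (Nat.floor_le (by positivity)) (hlogp_nonneg p hp)
      _ = (N:ℝ) * (Real.log p / p) := by ring
  -- N * S ≤ A + θ
  have hNSA : (N:ℝ) * S ≤ A + θ := by
    rw [hA, hS, hθ, Finset.mul_sum, ← Finset.sum_add_distrib]
    refine Finset.sum_le_sum fun p hp => ?_
    have hppos : (0:ℝ) < p := by exact_mod_cast (hprime p hp).pos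
    rw [hfloor p hp]
    have h1 : (N:ℝ)/(p:ℝ) < (⌊(N:ℝ)/(p:ℝ)⌋₊ : ℝ) + 1 := Nat.lt_floor_add_one _
    calc (N:ℝ) * (Real.log p / p) = ((N:ℝ)/(p:ℝ)) * Real.log p := by ring
      _ ≤ ((⌊(N:ℝ)/(p:ℝ)⌋₊ : ℝ) + 1) * Real.log p :=
          mul_le_mul_of_nonneg_right h1.le (hlogp_nonneg p hp)
      _ = (⌊(N:ℝ)/(p:ℝ)⌋₊ : ℝ) * Real.log p + Real.log p := by ring
  -- 0 ≤ B ≤ 2 c N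
  have hB0 : 0 ≤ B := Finset.sum_nonneg fun p hp => mul_nonneg
    (Finset.sum_nonneg fun i _ => by positivity) (hlogp_nonneg p hp)
  have hBle : B ≤ 2 * c * N := by
    have step : B ≤ ∑ p ∈ P, 2 * (N:ℝ) * (Real.log p / (p:ℝ)^2) := by
      refine Finset.sum_le_sum fun p hp => ?_
      have hppos : (0:ℝ) < p := by exact_mod_cast (hprime p hp).pos
      calc (∑ i ∈ Ico 2 (N+1), ((N / p ^ i : ℕ) : ℝ)) * Real.log p
          ≤ (2 * N / (p:ℝ)^2) * Real.log p :=
            mul_le_mul_of_nonneg_right (mertens_inner_geom N p (hp2 p hp)) (hlogp_nonneg p hp)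
        _ = 2 * (N:ℝ) * (Real.log p / (p:ℝ)^2) := by ring
    have step2 : ∑ p ∈ P, Real.log p / (p:ℝ)^2 ≤ c := by
      rw [hc]
      refine Summable.sum_le_tsum P (fun n _ => ?_) mertens_summable
      rcases Nat.eq_zero_or_pos n with h | h
      · simp [h]
      · have : (1:ℝ) ≤ n := by exact_mod_cast h
        positivity
    calc B ≤ ∑ p ∈ P, 2 * (N:ℝ) * (Real.log p / (p:ℝ)^2) := step
      _ = 2 * (N:ℝ) * ∑ p ∈ P, Real.log p / (p:ℝ)^2 := by rw [Finset.mul_sum]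
      _ ≤ 2 * (N:ℝ) * c := mul_le_mul_of_nonneg_left step2 (by positivity)
      _ = 2 * c * N := by ring
  -- θ ≤ N log 4
  have hθle : θ ≤ (N:ℝ) * Real.log 4 := mertens_primorial_log N
  -- factorial bounds
  obtain ⟨hT1, hT2⟩ := mertens_fact_bounds N hN
  -- combine
  have hN0 : (0:ℝ) < N := by linarith
  have up : (N:ℝ) * S ≤ (N:ℝ) * (Real.log N + (Real.log 4 + 1 + 2*c)) := by
    have : (N:ℝ) * S ≤ (N:ℝ) * Real.log N + (N:ℝ) * Real.log 4 := by
      nlinarith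
    nlinarith
  have lo : (N:ℝ) * (Real.log N - (Real.log 4 + 1 + 2*c)) ≤ (N:ℝ) * S := by
    nlinarith
  rw [abs_le]
  constructor
  · have := (mul_le_mul_iff_right₀ hN0).mp lo
    linarith
  · have := (mul_le_mul_iff_right₀ hN0).mp up
    linarith

theorem stmt_16 :
    Tendsto (fun x : ℝ =>
        (∑ p ∈ (Finset.Iic ⌊x⌋₊).filter Nat.Prime, Real.log p / p) / Real.log x)
      atTop (nhds 1) := by
  obtain ⟨C, hC0, hC⟩ := mertens_main
  set S : ℝ → ℝ := fun x => ∑ p ∈ (Finset.Iic ⌊x⌋₊).filter Nat.Prime, Real.log p / p with hSdef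
  have key : ∀ x : ℝ, 2 ≤ x → |S x - Real.log x| ≤ C + Real.log 2 := by
    intro x hx
    set N := ⌊x⌋₊ with hNdef
    have hx0 : (0:ℝ) ≤ x := by linarith
    have hN1 : 1 ≤ N := by
      rw [hNdef]
      exact Nat.le_floor (by exact_mod_cast (by linarith : (1:ℝ) ≤ x))
    have hNx : (N:ℝ) ≤ x := Nat.floor_le hx0
    have hxN : x < (N:ℝ) + 1 := Nat.lt_floor_add_one x
    have hN0 : (0:ℝ) < N := by exact_mod_cast hN1
    have h2N : (N:ℝ) + 1 ≤ 2 * N := by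
      have : (1:ℝ) ≤ N := by exact_mod_cast hN1
      linarith
    have hlog1 : Real.log (N:ℝ) ≤ Real.log x := Real.log_le_log hN0 hNx
    have hlog2 : Real.log x ≤ Real.log N + Real.log 2 := by
      calc Real.log x ≤ Real.log (2 * N) := Real.log_le_log (by linarith) (by linarith)
        _ = Real.log 2 + Real.log N := Real.log_mul (by norm_num) hN0.ne'
        _ = Real.log N + Real.log 2 := by ring
    have hmain := hC N hN1
    rw [abs_le] at hmain ⊢
    have hlog2' : (0:ℝ) ≤ Real.log 2 := Real.log_nonneg (by norm_num)
    constructor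
    · have : -(C) ≤ S x - Real.log N := by
        simpa [hSdef] using hmain.1
      linarith
    · have : S x - Real.log N ≤ C := by
        simpa [hSdef] using hmain.2
      linarith
  set C' : ℝ := C + Real.log 2 with hC'
  have hC'0 : 0 ≤ C' := by
    have : (0:ℝ) ≤ Real.log 2 := Real.log_nonneg (by norm_num)
    rw [hC']; linarith
  have hg : Tendsto (fun x => (S x - Real.log x) * (Real.log x)⁻¹) atTop (nhds 0) := by
    apply squeeze_zero_norm' (a := fun x => C' * (Real.log x)⁻¹)
    · filter_upwards [eventually_ge_atTop (2:ℝ)] with x hx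
      have hlogpos : 0 < Real.log x := Real.log_pos (by linarith)
      rw [norm_mul, Real.norm_eq_abs, Real.norm_eq_abs, abs_inv, abs_of_pos hlogpos]
      exact mul_le_mul_of_nonneg_right (key x hx) (by positivity)
    · have : Tendsto (fun x : ℝ => (Real.log x)⁻¹) atTop (nhds 0) :=
        Real.tendsto_log_atTop.inv_tendsto_atTop
      simpa using this.const_mul C'
  have heq : (fun x => 1 + (S x - Real.log x) * (Real.log x)⁻¹) =ᶠ[atTop]
      (fun x => S x / Real.log x) := by
    filter_upwards [eventually_ge_atTop (2:ℝ)] with x hx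
    have hlogpos : 0 < Real.log x := Real.log_pos (by linarith)
    field_simp
    ring
  have : Tendsto (fun x => 1 + (S x - Real.log x) * (Real.log x)⁻¹) atTop (nhds 1) := by
    simpa using tendsto_const_nhds.add hg
  exact (this.congr' heq)
end
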